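/- In the unlearning setup with coherence definitions, there is a constant c > 0 depending only on d, n_r and n_f such that for every integer k ≥ 1, Tr(N_k) ≥ c · ( (√C_r + √C_f)² (n_r n_f)² λ_max(D)² / (2 σ²) )^k, where σ is the unlearning coherence. In particular, if (√C_r + √C_f) n_r n_f λ_max(D) > √2 σ then Tr(N_k) → ∞ as k → ∞. -/

import Mathlib

set_option maxHeartbeats 1000000
set_option linter.unusedSectionVars false


open Matrix Filter Finset Set
open scoped BigOperators

noncomputable section

/-- Frobenius norm of a real square matrix. -/
def frob {n : Type*} [Fintype n] (M : Matrix n n ℝ) : ℝ :=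
  Real.sqrt (∑ i, ∑ j, (M i j) ^ 2)

open Classical in
/-- The positive semidefinite square root of a matrix (junk value `0` on non-PSD input). -/
def psdSqrt {n : Type*} [Fintype n] [DecidableEq n] (A : Matrix n n ℝ) : Matrix n n ℝ :=
  if h : A.PosSemidef then
    (h.1.eigenvectorUnitary : Matrix n n ℝ) * diagonal (Real.sqrt ∘ h.1.eigenvalues) *
      (star (h.1.eigenvectorUnitary : Matrix n n ℝ))
  else 0

open Classical in
/-- The largest eigenvalue of a symmetric real matrix (junk value `0` otherwise). -/
def lamMax {n : Type*} [Fintype n] [DecidableEq n] (A : Matrix n n ℝ) : ℝ :=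
  if h : A.IsHermitian then ⨆ i, h.eigenvalues i else 0

/-- Probability of observing the Bernoulli(B/n) selection pattern `x`. -/
def selProb (n B : ℕ) (x : Fin n → Bool) : ℝ :=
  ∏ i, if x i then (B : ℝ) / n else 1 - (B : ℝ) / n

/-- Average Hessian of a family. -/
def Hbar {d n : ℕ} (H : Fin n → Matrix (Fin d) (Fin d) ℝ) : Matrix (Fin d) (Fin d) ℝ :=
  (n : ℝ)⁻¹ • ∑ i, H i

/-- Mean update operator `J = I − η(1−α)H_R + ηα H_F`. -/
def Jbar {d nr nf : ℕ} (η α : ℝ) (HR : Fin nr → Matrix (Fin d) (Fin d) ℝ)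
    (HF : Fin nf → Matrix (Fin d) (Fin d) ℝ) : Matrix (Fin d) (Fin d) ℝ :=
  1 - (η * (1 - α)) • Hbar HR + (η * α) • Hbar HF

/-- Random update operator for the batch-selection pattern `x`. -/
def Jop {d nr nf : ℕ} (η α : ℝ) (B : ℕ) (HR : Fin nr → Matrix (Fin d) (Fin d) ℝ)
    (HF : Fin nf → Matrix (Fin d) (Fin d) ℝ)
    (x : (Fin nr → Bool) × (Fin nf → Bool)) : Matrix (Fin d) (Fin d) ℝ :=
  1 - (η * (1 - α) / B) • (∑ r, if x.1 r then HR r else 0)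
    + (η * α / B) • (∑ f, if x.2 f then HF f else 0)

/-- `C_r = η²(1−α)²(1/n_r)(1/B − 1/n_r)`. -/
def Crc (η α : ℝ) (B nr : ℕ) : ℝ :=
  η ^ 2 * (1 - α) ^ 2 * (nr : ℝ)⁻¹ * ((B : ℝ)⁻¹ - (nr : ℝ)⁻¹)

/-- `C_f = η²α²(1/n_f)(1/B − 1/n_f)`. -/
def Cfc (η α : ℝ) (B nf : ℕ) : ℝ :=
  η ^ 2 * α ^ 2 * (nf : ℝ)⁻¹ * ((B : ℝ)⁻¹ - (nf : ℝ)⁻¹)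

/-- Noise-accumulation matrices `N_k`. -/
def Nmat {d nr nf : ℕ} (η α : ℝ) (B : ℕ) (HR : Fin nr → Matrix (Fin d) (Fin d) ℝ)
    (HF : Fin nf → Matrix (Fin d) (Fin d) ℝ) : ℕ → Matrix (Fin d) (Fin d) ℝ
  | 0 => 1
  | k + 1 =>
      Cfc η α B nf • ∑ f, HF f * Nmat η α B HR HF k * HF f
        + Crc η α B nr • ∑ r, HR r * Nmat η α B HR HF k * HR r

/-- `W_k = J_{k−1} ⋯ J_1 J_0` for a finite sequence of batch selections. -/
def Wk {d nr nf : ℕ} (η α : ℝ) (B : ℕ) (HR : Fin nr → Matrix (Fin d) (Fin d) ℝ)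
    (HF : Fin nf → Matrix (Fin d) (Fin d) ℝ) {k : ℕ}
    (s : Fin k → (Fin nr → Bool) × (Fin nf → Bool)) : Matrix (Fin d) (Fin d) ℝ :=
  (List.ofFn fun i => Jop η α B HR HF (s i)).reverse.prod

/-- `E‖w_k‖² = E Tr(W_k W_kᵀ)`, the expectation taken over the i.i.d. Bernoulli
batch selections of the `k` steps. -/
def Ewk2 {d nr nf : ℕ} (η α : ℝ) (B : ℕ) (HR : Fin nr → Matrix (Fin d) (Fin d) ℝ)
    (HF : Fin nf → Matrix (Fin d) (Fin d) ℝ) (k : ℕ) : ℝ :=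
  ∑ s : Fin k → (Fin nr → Bool) × (Fin nf → Bool),
    (∏ i, selProb nr B (s i).1 * selProb nf B (s i).2) *
      (Wk η α B HR HF s * (Wk η α B HR HF s)ᵀ).trace

/-- `E[(e₁ᵀ w_k)²]`, i.e. the `(i0,i0)` entry of `E[W_k W_kᵀ]`. -/
def Ee1 {d nr nf : ℕ} (η α : ℝ) (B : ℕ) (HR : Fin nr → Matrix (Fin d) (Fin d) ℝ)
    (HF : Fin nf → Matrix (Fin d) (Fin d) ℝ) (i0 : Fin d) (k : ℕ) : ℝ :=
  ∑ s : Fin k → (Fin nr → Bool) × (Fin nf → Bool),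
    (∏ i, selProb nr B (s i).1 * selProb nf B (s i).2) *
      ((Wk η α B HR HF s * (Wk η α B HR HF s)ᵀ) i0 i0)

/-- Mixed Hessian `D_{rf} = C'_r H_r^R + C'_f H_f^F` for a retain/forget pair. -/
def Drf {d nr nf : ℕ} (Cr' Cf' : ℝ) (HR : Fin nr → Matrix (Fin d) (Fin d) ℝ)
    (HF : Fin nf → Matrix (Fin d) (Fin d) ℝ) (p : Fin nr × Fin nf) :
    Matrix (Fin d) (Fin d) ℝ :=
  Cr' • HR p.1 + Cf' • HF p.2

/-- Mix-Hessian `D = (1/(n_r n_f)) Σ_{r,f} D_{rf}`. -/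
def Dmix {d nr nf : ℕ} (Cr' Cf' : ℝ) (HR : Fin nr → Matrix (Fin d) (Fin d) ℝ)
    (HF : Fin nf → Matrix (Fin d) (Fin d) ℝ) : Matrix (Fin d) (Fin d) ℝ :=
  ((nr : ℝ) * nf)⁻¹ • ∑ p : Fin nr × Fin nf, Drf Cr' Cf' HR HF p

/-- Mix-coherence matrix `S_{(r,f),(r',f')} = ‖D_{rf}^{1/2} D_{r'f'}^{1/2}‖_F`. -/
def Smat {d nr nf : ℕ} (Cr' Cf' : ℝ) (HR : Fin nr → Matrix (Fin d) (Fin d) ℝ)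
    (HF : Fin nf → Matrix (Fin d) (Fin d) ℝ) :
    Matrix (Fin nr × Fin nf) (Fin nr × Fin nf) ℝ :=
  Matrix.of fun p q =>
    frob (psdSqrt (Drf Cr' Cf' HR HF p) * psdSqrt (Drf Cr' Cf' HR HF q))

/-- Unlearning coherence `σ = λ_max(S) / max_{(r,f)} λ_max(D_{rf})`. -/
def cohSigma {d nr nf : ℕ} (Cr' Cf' : ℝ) (HR : Fin nr → Matrix (Fin d) (Fin d) ℝ)
    (HF : Fin nf → Matrix (Fin d) (Fin d) ℝ) : ℝ :=
  lamMax (Smat Cr' Cf' HR HF) / ⨆ p : Fin nr × Fin nf, lamMax (Drf Cr' Cf' HR HF p)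

/-- Stacked filter-weight vector of the two-layer ReLU CNN signal-plus-noise model. -/
def wvec (d mfil : ℕ) (μ ξi : Fin d → ℝ) (yi : ℝ)
    (ai bi : Bool → Fin mfil → Bool) : (Bool × Fin mfil) × Fin d → ℝ :=
  fun p =>
    ((if p.1.1 then (1 : ℝ) else -1) / mfil) *
      ((if ai p.1.1 p.1.2 then (1 : ℝ) else 0) * μ p.2 +
        (if bi p.1.1 p.1.2 then (1 : ℝ) else 0) * yi * ξi p.2)

/-- Per-sample Hessian `H_i = ℓ''_i w_i w_iᵀ` of the signal-plus-noise model. -/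
def hessCNN (d mfil : ℕ) (μ ξi : Fin d → ℝ) (yi ℓi : ℝ)
    (ai bi : Bool → Fin mfil → Bool) :
    Matrix ((Bool × Fin mfil) × Fin d) ((Bool × Fin mfil) × Fin d) ℝ :=
  ℓi • vecMulVec (wvec d mfil μ ξi yi ai bi) (wvec d mfil μ ξi yi ai bi)

/-- Mixed Hessian `D_{rf} = C'_r H_r + C'_f H_{n_r+f}` in the CNN model, with the
retain set given by the first `n_r` samples and the forget set by the last `n_f`. -/
def DrfCNN (d mfil nr nf : ℕ) (μ : Fin d → ℝ) (ξ : Fin (nr + nf) → Fin d → ℝ)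
    (y ℓ : Fin (nr + nf) → ℝ) (a b : Fin (nr + nf) → Bool → Fin mfil → Bool)
    (Cr' Cf' : ℝ) (p : Fin nr × Fin nf) :
    Matrix ((Bool × Fin mfil) × Fin d) ((Bool × Fin mfil) × Fin d) ℝ :=
  Cr' • hessCNN d mfil μ (ξ (Fin.castAdd nf p.1)) (y (Fin.castAdd nf p.1))
        (ℓ (Fin.castAdd nf p.1)) (a (Fin.castAdd nf p.1)) (b (Fin.castAdd nf p.1))
    + Cf' • hessCNN d mfil μ (ξ (Fin.natAdd nr p.2)) (y (Fin.natAdd nr p.2))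
        (ℓ (Fin.natAdd nr p.2)) (a (Fin.natAdd nr p.2)) (b (Fin.natAdd nr p.2))

/-- Mix-coherence matrix of the CNN model. -/
def SmatCNN (d mfil nr nf : ℕ) (μ : Fin d → ℝ) (ξ : Fin (nr + nf) → Fin d → ℝ)
    (y ℓ : Fin (nr + nf) → ℝ) (a b : Fin (nr + nf) → Bool → Fin mfil → Bool)
    (Cr' Cf' : ℝ) : Matrix (Fin nr × Fin nf) (Fin nr × Fin nf) ℝ :=
  Matrix.of fun p q =>
    frob (psdSqrt (DrfCNN d mfil nr nf μ ξ y ℓ a b Cr' Cf' p) *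
      psdSqrt (DrfCNN d mfil nr nf μ ξ y ℓ a b Cr' Cf' q))

namespace Matrix.PosSemidef
variable {m : Type*} [Fintype m] [DecidableEq m]

noncomputable def sqrt {A : Matrix m m ℝ} (hA : A.PosSemidef) : Matrix m m ℝ :=
  (hA.1.eigenvectorUnitary : Matrix m m ℝ) * diagonal (Real.sqrt ∘ hA.1.eigenvalues) *
      (star (hA.1.eigenvectorUnitary : Matrix m m ℝ))

lemma posSemidef_sqrt {A : Matrix m m ℝ} (hA : A.PosSemidef) : hA.sqrt.PosSemidef := by
  have hD : (diagonal (Real.sqrt ∘ hA.1.eigenvalues)).PosSemidef :=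
    posSemidef_diagonal_iff.mpr fun i => Real.sqrt_nonneg _
  exact hD.mul_mul_conjTranspose_same _

lemma sqrt_mul_self {A : Matrix m m ℝ} (hA : A.PosSemidef) : hA.sqrt * hA.sqrt = A := by
  have hUU : star (hA.1.eigenvectorUnitary : Matrix m m ℝ) * (hA.1.eigenvectorUnitary : Matrix m m ℝ) = 1 :=
    Matrix.mem_unitaryGroup_iff'.mp hA.1.eigenvectorUnitary.2
  have hdd : diagonal (Real.sqrt ∘ hA.1.eigenvalues) * diagonal (Real.sqrt ∘ hA.1.eigenvalues)
      = diagonal (RCLike.ofReal ∘ hA.1.eigenvalues) := by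
    rw [diagonal_mul_diagonal]; congr 1; funext i
    simp [Real.mul_self_sqrt (hA.eigenvalues_nonneg i)]
  conv_rhs => rw [hA.1.spectral_theorem, Unitary.conjStarAlgAut_apply]
  simp only [sqrt, mul_assoc]
  rw [← mul_assoc (star _) (_ : Matrix m m ℝ), hUU, one_mul, ← mul_assoc (diagonal _), hdd]

end Matrix.PosSemidef

namespace Aux

variable {m : Type*} [Fintype m] [DecidableEq m]

lemma psd_smul {A : Matrix m m ℝ} (hA : A.PosSemidef) {c : ℝ} (hc : 0 ≤ c) :
    (c • A).PosSemidef := by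
  refine Matrix.PosSemidef.of_dotProduct_mulVec_nonneg ?_ fun x => ?_
  · show (c • A)ᴴ = c • A
    rw [conjTranspose_smul, star_trivial, hA.1]
  · rw [smul_mulVec, dotProduct_smul]
    exact mul_nonneg hc (by simpa using hA.dotProduct_mulVec_nonneg x)

lemma psd_sum {ι : Type*} (s : Finset ι) (f : ι → Matrix m m ℝ)
    (h : ∀ i ∈ s, (f i).PosSemidef) : (∑ i ∈ s, f i).PosSemidef := by
  classical
  induction s using Finset.induction with
  | empty => simpa using Matrix.PosSemidef.zero
  | insert _ _ hx ih =>
    rw [Finset.sum_insert hx]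
    exact (h _ (Finset.mem_insert_self _ _)).add
      (ih fun i hi => h i (Finset.mem_insert_of_mem hi))

lemma quad_nonneg {A : Matrix m m ℝ} (hA : A.PosSemidef) (x : m → ℝ) :
    0 ≤ x ⬝ᵥ A *ᵥ x := by simpa using hA.dotProduct_mulVec_nonneg x

lemma transpose_eq {A : Matrix m m ℝ} (hA : A.IsHermitian) : Aᵀ = A := by
  rw [← conjTranspose_eq_transpose_of_trivial]; exact hA

lemma quad_symm {A : Matrix m m ℝ} (hA : A.IsHermitian) (x y : m → ℝ) :
    x ⬝ᵥ A *ᵥ y = y ⬝ᵥ A *ᵥ x := by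
  rw [dotProduct_mulVec, ← mulVec_transpose, transpose_eq hA, dotProduct_comm]

lemma sum_mulVec {ι : Type*} (s : Finset ι) (A : ι → Matrix m m ℝ) (v : m → ℝ) :
    (∑ j ∈ s, A j) *ᵥ v = ∑ j ∈ s, (A j *ᵥ v) := by
  classical
  induction s using Finset.induction with
  | empty => simp [Matrix.zero_mulVec]
  | insert _ _ hx ih =>
    rw [Finset.sum_insert hx, Finset.sum_insert hx, Matrix.add_mulVec, ih]


lemma psd_trace_nonneg {A : Matrix m m ℝ} (hA : A.PosSemidef) : 0 ≤ A.trace := by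
  rw [Matrix.trace]
  refine Finset.sum_nonneg fun i _ => ?_
  have := quad_nonneg hA (Pi.single i 1)
  simpa [Matrix.mulVec_single, dotProduct, Pi.single_apply] using this

lemma trace_mul_psd_nonneg {A B : Matrix m m ℝ} (hA : A.PosSemidef) (hB : B.PosSemidef) :
    0 ≤ (A * B).trace := by
  have h1 : A * B = A * (hB.sqrt * hB.sqrt) := by rw [hB.sqrt_mul_self]
  have h2 : (A * (hB.sqrt * hB.sqrt)).trace = (hB.sqrt * A * hB.sqrt).trace := by
    rw [← mul_assoc, Matrix.trace_mul_comm, ← mul_assoc]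
  have h3 : (hB.sqrt * A * hB.sqrt).PosSemidef := by
    have := hA.mul_mul_conjTranspose_same hB.sqrt
    rwa [hB.posSemidef_sqrt.1] at this
  rw [h1, h2]
  exact psd_trace_nonneg h3

lemma dot_sq_le (u x : m → ℝ) : (u ⬝ᵥ x) ^ 2 ≤ (u ⬝ᵥ u) * (x ⬝ᵥ x) := by
  have := Finset.sum_mul_sq_le_sq_mul_sq Finset.univ u x
  simpa [dotProduct, pow_two] using this

lemma trace_ge_quad {N : Matrix m m ℝ} (hN : N.PosSemidef) {u : m → ℝ}
    (hu : u ⬝ᵥ u = 1) : u ⬝ᵥ N *ᵥ u ≤ N.trace := by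
  have hP : (1 - Matrix.vecMulVec u u : Matrix m m ℝ).PosSemidef := by
    refine Matrix.PosSemidef.of_dotProduct_mulVec_nonneg ?_ fun x => ?_
    · show (1 - Matrix.vecMulVec u u : Matrix m m ℝ)ᴴ = _
      rw [conjTranspose_sub, conjTranspose_one]
      congr 1
      ext i j
      simp [Matrix.vecMulVec_apply, mul_comm]
    · have hcs := dot_sq_le u x
      rw [hu, one_mul] at hcs
      have hx : x ⬝ᵥ (1 - Matrix.vecMulVec u u : Matrix m m ℝ) *ᵥ x
          = x ⬝ᵥ x - (u ⬝ᵥ x) ^ 2 := by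
        rw [Matrix.sub_mulVec, dotProduct_sub, Matrix.one_mulVec]
        congr 1
        simp only [Matrix.mulVec, dotProduct, Matrix.vecMulVec_apply, pow_two,
          Finset.mul_sum, Finset.sum_mul]
        rw [Finset.sum_comm]
        exact Finset.sum_congr rfl fun i _ => Finset.sum_congr rfl fun j _ => by ring
      simp only [star_trivial]
      rw [hx]
      linarith
  have h1 : (N * (1 - Matrix.vecMulVec u u)).trace = N.trace - u ⬝ᵥ N *ᵥ u := by
    rw [mul_sub, mul_one, Matrix.trace_sub]
    congr 1
    simp only [Matrix.trace, Matrix.diag_apply, Matrix.mul_apply, Matrix.vecMulVec_apply,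
      Matrix.mulVec, dotProduct, Finset.mul_sum]
    exact Finset.sum_congr rfl fun i _ => Finset.sum_congr rfl fun j _ => by ring
  have := trace_mul_psd_nonneg hN hP
  rw [h1] at this
  linarith


lemma lamMax_herm {A : Matrix m m ℝ} (hA : A.IsHermitian) :
    lamMax A = ⨆ i, hA.eigenvalues i := by rw [lamMax, dif_pos hA]

lemma eig_le_lamMax [Nonempty m] {A : Matrix m m ℝ} (hA : A.IsHermitian) (i : m) :
    hA.eigenvalues i ≤ lamMax A := by
  rw [lamMax_herm hA]; exact le_ciSup (Set.Finite.bddAbove (Set.finite_range _)) i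

lemma lamMax_nonneg [Nonempty m] {A : Matrix m m ℝ} (hA : A.PosSemidef) :
    0 ≤ lamMax A :=
  le_trans (hA.eigenvalues_nonneg (Classical.arbitrary m)) (eig_le_lamMax hA.1 _)

lemma exists_top_eigenvector [Nonempty m] {A : Matrix m m ℝ} (hA : A.IsHermitian) :
    ∃ u : m → ℝ, u ⬝ᵥ u = 1 ∧ A *ᵥ u = lamMax A • u := by
  obtain ⟨j, hj⟩ := Finite.exists_max hA.eigenvalues
  have hmax : lamMax A = hA.eigenvalues j := by
    rw [lamMax_herm hA]
    exact le_antisymm (ciSup_le hj) (le_ciSup (Set.Finite.bddAbove (Set.finite_range _)) j)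
  refine ⟨⇑(hA.eigenvectorBasis j), ?_, ?_⟩
  · have h1 : (inner (𝕜 := ℝ) (hA.eigenvectorBasis j) (hA.eigenvectorBasis j)) = (1:ℝ) := by
      rw [real_inner_self_eq_norm_sq, hA.eigenvectorBasis.orthonormal.1 j]
      norm_num
    rw [EuclideanSpace.inner_eq_star_dotProduct, star_trivial] at h1
    exact h1
  · rw [hmax]
    exact hA.mulVec_eigenvectorBasis j

lemma quad_le_lamMax [Nonempty m] {A : Matrix m m ℝ} (hA : A.IsHermitian) (x : m → ℝ) :
    x ⬝ᵥ A *ᵥ x ≤ lamMax A * (x ⬝ᵥ x) := by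
  classical
  set U : Matrix m m ℝ := (Matrix.IsHermitian.eigenvectorUnitary hA : Matrix m m ℝ) with hU
  have hUU : U * star U = 1 :=
    (Matrix.mem_unitaryGroup_iff).mp (Matrix.IsHermitian.eigenvectorUnitary hA).2
  set y : m → ℝ := x ᵥ* U with hy
  have hyy : y ⬝ᵥ y = x ⬝ᵥ x := by
    have h1 : y ⬝ᵥ y = x ⬝ᵥ (U *ᵥ y) := (dotProduct_mulVec x U y).symm
    have h2 : U *ᵥ y = (U * star U) *ᵥ x := by
      rw [hy, ← Matrix.mulVec_mulVec]
      congr 1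
      rw [Matrix.star_eq_conjTranspose, Matrix.conjTranspose_eq_transpose_of_trivial,
        Matrix.mulVec_transpose]
    rw [h1, h2, hUU, Matrix.one_mulVec]
  have hq : x ⬝ᵥ A *ᵥ x = ∑ i, hA.eigenvalues i * y i ^ 2 := by
    conv_lhs => rw [hA.spectral_theorem, Unitary.conjStarAlgAut_apply]
    rw [← Matrix.mulVec_mulVec, ← Matrix.mulVec_mulVec, dotProduct_mulVec x U]
    have h2 : star U *ᵥ x = y := by
      rw [Matrix.star_eq_conjTranspose, Matrix.conjTranspose_eq_transpose_of_trivial,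
        Matrix.mulVec_transpose, hy]
    rw [h2]
    simp only [RCLike.ofReal_real_eq_id, dotProduct, Matrix.mulVec_diagonal,
      Function.comp, id_eq]
    exact Finset.sum_congr rfl fun i _ => by ring
  rw [hq, ← hyy]
  have : ∑ i, hA.eigenvalues i * y i ^ 2 ≤ ∑ i, lamMax A * y i ^ 2 :=
    Finset.sum_le_sum fun i _ =>
      mul_le_mul_of_nonneg_right (eig_le_lamMax hA i) (sq_nonneg _)
  refine this.trans_eq ?_
  rw [← Finset.mul_sum]
  congr 1
  simp [dotProduct, pow_two]


lemma dot_sum {ι : Type*} (s : Finset ι) (u : m → ℝ) (w : ι → m → ℝ) :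
    u ⬝ᵥ (∑ j ∈ s, w j) = ∑ j ∈ s, u ⬝ᵥ w j := by
  classical
  induction s using Finset.induction with
  | empty => simp
  | insert _ _ hx ih => rw [Finset.sum_insert hx, Finset.sum_insert hx, dotProduct_add, ih]

lemma quad_conj {H N : Matrix m m ℝ} (hH : H.IsHermitian) (u : m → ℝ) :
    u ⬝ᵥ ((H * N * H) *ᵥ u) = (H *ᵥ u) ⬝ᵥ (N *ᵥ (H *ᵥ u)) := by
  rw [← Matrix.mulVec_mulVec, ← Matrix.mulVec_mulVec, dotProduct_mulVec u H,
    ← Matrix.mulVec_transpose, transpose_eq hH]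

lemma para {N : Matrix m m ℝ} (hN : N.PosSemidef) (a b : m → ℝ) :
    (1 / 2) * ((a + b) ⬝ᵥ N *ᵥ (a + b)) ≤ a ⬝ᵥ N *ᵥ a + b ⬝ᵥ N *ᵥ b := by
  have h1 : 0 ≤ (a - b) ⬝ᵥ N *ᵥ (a - b) := quad_nonneg hN _
  have hsym : a ⬝ᵥ N *ᵥ b = b ⬝ᵥ N *ᵥ a := quad_symm hN.1 a b
  have e1 : (a + b) ⬝ᵥ N *ᵥ (a + b)
      = a ⬝ᵥ N *ᵥ a + a ⬝ᵥ N *ᵥ b + b ⬝ᵥ N *ᵥ a + b ⬝ᵥ N *ᵥ b := by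
    rw [Matrix.mulVec_add, add_dotProduct, dotProduct_add, dotProduct_add]; ring
  have e2 : (a - b) ⬝ᵥ N *ᵥ (a - b)
      = a ⬝ᵥ N *ᵥ a - a ⬝ᵥ N *ᵥ b - b ⬝ᵥ N *ᵥ a + b ⬝ᵥ N *ᵥ b := by
    rw [Matrix.mulVec_sub, sub_dotProduct, dotProduct_sub, dotProduct_sub]; ring
  rw [e1]; rw [e2] at h1; linarith

lemma dot_le_norms (a v : m → ℝ) :
    a ⬝ᵥ v ≤ Real.sqrt (a ⬝ᵥ a) * Real.sqrt (v ⬝ᵥ v) := by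
  have h := dot_sq_le a v
  have h2 : a ⬝ᵥ v ≤ |a ⬝ᵥ v| := le_abs_self _
  refine h2.trans ?_
  rw [← Real.sqrt_sq_eq_abs, ← Real.sqrt_mul (quad_dot_nonneg_aux a)]
  exact Real.sqrt_le_sqrt h
  where quad_dot_nonneg_aux (a : m → ℝ) : 0 ≤ a ⬝ᵥ a :=
    Finset.sum_nonneg fun i _ => mul_self_nonneg _

lemma lamMax_pos [Nonempty m] {A : Matrix m m ℝ} (hA : A.PosSemidef) (h0 : A ≠ 0) :
    0 < lamMax A := by
  rcases lt_or_ge 0 (lamMax A) with h | h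
  · exact h
  exfalso
  apply h0
  have hz : (RCLike.ofReal ∘ hA.1.eigenvalues : m → ℝ) = 0 := by
    funext i
    have := le_antisymm ((eig_le_lamMax hA.1 i).trans h) (hA.eigenvalues_nonneg i)
    simpa using this
  have hst := hA.1.spectral_theorem
  rw [hz] at hst
  rw [hst, show (Matrix.diagonal (0 : m → ℝ)) = 0 from Matrix.diagonal_zero, map_zero]


lemma frob_nonneg (M : Matrix m m ℝ) : 0 ≤ frob M := Real.sqrt_nonneg _

lemma frob_transpose (M : Matrix m m ℝ) : frob Mᵀ = frob M := by
  unfold frob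
  congr 1
  rw [Finset.sum_comm]
  simp [Matrix.transpose_apply]

lemma frob_pos {M : Matrix m m ℝ} (h : M ≠ 0) : 0 < frob M := by
  apply Real.sqrt_pos.mpr
  have : ∃ i j, M i j ≠ 0 := by
    by_contra hc
    push_neg at hc
    exact h (by ext i j; simpa using hc i j)
  obtain ⟨i, j, hij⟩ := this
  have h1 : (0:ℝ) < M i j ^ 2 := by positivity
  have h2 : M i j ^ 2 ≤ ∑ j', M i j' ^ 2 :=
    Finset.single_le_sum (f := fun j' => M i j' ^ 2) (fun _ _ => sq_nonneg _) (Finset.mem_univ j)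
  have h3 : ∑ j', M i j' ^ 2 ≤ ∑ i', ∑ j', M i' j' ^ 2 :=
    Finset.single_le_sum (f := fun i' => ∑ j', M i' j' ^ 2)
      (fun _ _ => Finset.sum_nonneg fun _ _ => sq_nonneg _) (Finset.mem_univ i)
  linarith

lemma norm_mulVec_le_frob (M : Matrix m m ℝ) (b : m → ℝ) :
    Real.sqrt ((M *ᵥ b) ⬝ᵥ (M *ᵥ b)) ≤ frob M * Real.sqrt (b ⬝ᵥ b) := by
  rw [frob, ← Real.sqrt_mul (Finset.sum_nonneg fun i _ => Finset.sum_nonneg fun j _ => sq_nonneg (M i j))]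
  apply Real.sqrt_le_sqrt
  have h1 : ∀ i, ((M *ᵥ b) i) ^ 2 ≤ (∑ j, M i j ^ 2) * (b ⬝ᵥ b) := by
    intro i
    have := Finset.sum_mul_sq_le_sq_mul_sq Finset.univ (M i) b
    simpa [Matrix.mulVec, dotProduct, pow_two] using this
  calc (M *ᵥ b) ⬝ᵥ (M *ᵥ b) = ∑ i, ((M *ᵥ b) i) ^ 2 := by
        simp [dotProduct, pow_two]
    _ ≤ ∑ i, (∑ j, M i j ^ 2) * (b ⬝ᵥ b) := Finset.sum_le_sum fun i _ => h1 i
    _ = (∑ i, ∑ j, M i j ^ 2) * (b ⬝ᵥ b) := by rw [Finset.sum_mul]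

lemma dot_mulVec_frob (a b : m → ℝ) (M : Matrix m m ℝ) :
    a ⬝ᵥ (M *ᵥ b) ≤ Real.sqrt (a ⬝ᵥ a) * (frob M * Real.sqrt (b ⬝ᵥ b)) :=
  (dot_le_norms a (M *ᵥ b)).trans
    (mul_le_mul_of_nonneg_left (norm_mulVec_le_frob M b) (Real.sqrt_nonneg _))


lemma mulVec_sum {ι : Type*} (s : Finset ι) (A : Matrix m m ℝ) (v : ι → m → ℝ) :
    A *ᵥ (∑ j ∈ s, v j) = ∑ j ∈ s, A *ᵥ v j := by
  classical
  induction s using Finset.induction with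
  | empty => simp
  | insert _ _ hx ih => rw [Finset.sum_insert hx, Finset.sum_insert hx, Matrix.mulVec_add, ih]

lemma herm_dot {P : Matrix m m ℝ} (hP : P.IsHermitian) (w v : m → ℝ) :
    w ⬝ᵥ (P *ᵥ v) = (P *ᵥ w) ⬝ᵥ v := by
  rw [dotProduct_mulVec, ← Matrix.mulVec_transpose, transpose_eq hP]

end Aux

/-- geometric divergence of the noise accumulation.  There is a
constant `c > 0` depending only on `d`, `n_r`, `n_f` such that for every `k ≥ 1`,
`Tr(N_k) ≥ c ((√C_r + √C_f)² (n_r n_f)² λ_max(D)² / (2σ²))^k`; in particular, if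
`(√C_r + √C_f) n_r n_f λ_max(D) > √2 σ` then `Tr(N_k) → ∞`. -/
theorem stmt14 (d nr nf : ℕ) (hd : 1 ≤ d) (hnr : 1 ≤ nr) (hnf : 1 ≤ nf) :
    ∃ c : ℝ, 0 < c ∧
      ∀ (B : ℕ) (η α : ℝ)
        (HR : Fin nr → Matrix (Fin d) (Fin d) ℝ)
        (HF : Fin nf → Matrix (Fin d) (Fin d) ℝ),
        0 < B → B ≤ nr → B ≤ nf → 0 < η → α ∈ Set.Icc (0 : ℝ) 1 →
        (∀ r, (HR r).PosSemidef) → (∀ f, (HF f).PosSemidef) →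
        0 < Real.sqrt (Crc η α B nr) + Real.sqrt (Cfc η α B nf) →
        (let Cr' : ℝ := Real.sqrt (Crc η α B nr) /
            (Real.sqrt (Crc η α B nr) + Real.sqrt (Cfc η α B nf))
         let Cf' : ℝ := Real.sqrt (Cfc η α B nf) /
            (Real.sqrt (Crc η α B nr) + Real.sqrt (Cfc η α B nf))
         let σ : ℝ := cohSigma Cr' Cf' HR HF
         (∃ p : Fin nr × Fin nf, Drf Cr' Cf' HR HF p ≠ 0) →
         (∀ k, 1 ≤ k →
            c * ((Real.sqrt (Crc η α B nr) + Real.sqrt (Cfc η α B nf)) ^ 2 *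
                ((nr : ℝ) * nf) ^ 2 * lamMax (Dmix Cr' Cf' HR HF) ^ 2 /
                  (2 * σ ^ 2)) ^ k
              ≤ (Nmat η α B HR HF k).trace) ∧
          (Real.sqrt 2 * σ <
              (Real.sqrt (Crc η α B nr) + Real.sqrt (Cfc η α B nf)) *
                ((nr : ℝ) * nf) * lamMax (Dmix Cr' Cf' HR HF) →
            Tendsto (fun k => (Nmat η α B HR HF k).trace) atTop atTop)) := by
  haveI hne_d : Nonempty (Fin d) := ⟨⟨0, hd⟩⟩
  haveI hne_p : Nonempty (Fin nr × Fin nf) := ⟨(⟨0, hnr⟩, ⟨0, hnf⟩)⟩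
  refine ⟨1, one_pos, ?_⟩
  intro B η α HR HF hB hBnr hBnf hη hα hHR hHF hs
  intro Cr' Cf' σ
  have hCr'e : Cr' = Real.sqrt (Crc η α B nr) /
      (Real.sqrt (Crc η α B nr) + Real.sqrt (Cfc η α B nf)) := rfl
  have hCf'e : Cf' = Real.sqrt (Cfc η α B nf) /
      (Real.sqrt (Crc η α B nr) + Real.sqrt (Cfc η α B nf)) := rfl
  have hσe : σ = cohSigma Cr' Cf' HR HF := rfl
  clear_value Cr' Cf' σ
  intro hne
  have hB0 : (0:ℝ) < B := by exact_mod_cast hB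
  have hCr0 : 0 ≤ Crc η α B nr := by
    have h1 : (nr:ℝ)⁻¹ ≤ (B:ℝ)⁻¹ := inv_anti₀ hB0 (by exact_mod_cast hBnr)
    have h2 : (0:ℝ) ≤ (B:ℝ)⁻¹ - (nr:ℝ)⁻¹ := sub_nonneg.mpr h1
    exact mul_nonneg (by positivity) h2
  have hCf0 : 0 ≤ Cfc η α B nf := by
    have h1 : (nf:ℝ)⁻¹ ≤ (B:ℝ)⁻¹ := inv_anti₀ hB0 (by exact_mod_cast hBnf)
    have h2 : (0:ℝ) ≤ (B:ℝ)⁻¹ - (nf:ℝ)⁻¹ := sub_nonneg.mpr h1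
    exact mul_nonneg (by positivity) h2
  set sr := Real.sqrt (Crc η α B nr) with hsrdef
  set sf := Real.sqrt (Cfc η α B nf) with hsfdef
  have hsr0 : 0 ≤ sr := Real.sqrt_nonneg _
  have hsf0 : 0 ≤ sf := Real.sqrt_nonneg _
  have hsrsq : sr ^ 2 = Crc η α B nr := Real.sq_sqrt hCr0
  have hsfsq : sf ^ 2 = Cfc η α B nf := Real.sq_sqrt hCf0
  have hCr'0 : 0 ≤ Cr' := hCr'e ▸ div_nonneg hsr0 hs.le
  have hCf'0 : 0 ≤ Cf' := hCf'e ▸ div_nonneg hsf0 hs.le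
  -- PSD of the mixed Hessians
  have hDpsd : ∀ p : Fin nr × Fin nf, (Drf Cr' Cf' HR HF p).PosSemidef := fun p =>
    (Aux.psd_smul (hHR p.1) hCr'0).add (Aux.psd_smul (hHF p.2) hCf'0)
  -- maximizing pair
  obtain ⟨pstar, hpstar⟩ :=
    Finite.exists_max (fun p : Fin nr × Fin nf => lamMax (Drf Cr' Cf' HR HF p))
  have hMsup : (⨆ p, lamMax (Drf Cr' Cf' HR HF p)) = lamMax (Drf Cr' Cf' HR HF pstar) :=
    le_antisymm (ciSup_le hpstar)
      (le_ciSup (f := fun p => lamMax (Drf Cr' Cf' HR HF p))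
        (Set.Finite.bddAbove (Set.finite_range _)) pstar)
  obtain ⟨p0, hp0⟩ := hne
  have hM0 : 0 < lamMax (Drf Cr' Cf' HR HF pstar) :=
    lt_of_lt_of_le (Aux.lamMax_pos (hDpsd p0) hp0) (hpstar p0)
  set lam := lamMax (Drf Cr' Cf' HR HF pstar) with hlamdef
  -- top eigenvector of the best pair
  obtain ⟨u, hu1, huD⟩ := Aux.exists_top_eigenvector (hDpsd pstar).1
  -- PSD of N_k
  have hNpsd : ∀ k, (Nmat η α B HR HF k).PosSemidef := by
    intro k
    induction k with
    | zero => exact Matrix.PosSemidef.one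
    | succ k ih =>
      show (Cfc η α B nf • ∑ f, HF f * Nmat η α B HR HF k * HF f
        + Crc η α B nr • ∑ r, HR r * Nmat η α B HR HF k * HR r).PosSemidef
      refine Matrix.PosSemidef.add (Aux.psd_smul (Aux.psd_sum _ _ fun f _ => ?_) hCf0)
        (Aux.psd_smul (Aux.psd_sum _ _ fun r _ => ?_) hCr0)
      · have h := ih.mul_mul_conjTranspose_same (HF f)
        rwa [(hHF f).1] at h
      · have h := ih.mul_mul_conjTranspose_same (HR r)
        rwa [(hHR r).1] at h
  -- growth of the quadratic form along u
  have hscale_r : (sr + sf) * Cr' = sr := by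
    rw [hCr'e]; field_simp
  have hscale_f : (sr + sf) * Cf' = sf := by
    rw [hCf'e]; field_simp
  have key : ∀ k, ((sr + sf) ^ 2 * lam ^ 2 / 2) ^ k
      ≤ u ⬝ᵥ (Nmat η α B HR HF k *ᵥ u) := by
    intro k
    induction k with
    | zero => simp [Nmat, Matrix.one_mulVec, hu1]
    | succ k ih =>
      have hexp : u ⬝ᵥ (Nmat η α B HR HF (k+1) *ᵥ u)
          = Cfc η α B nf * ∑ f, u ⬝ᵥ ((HF f * Nmat η α B HR HF k * HF f) *ᵥ u)
            + Crc η α B nr * ∑ r, u ⬝ᵥ ((HR r * Nmat η α B HR HF k * HR r) *ᵥ u) := by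
        show u ⬝ᵥ ((Cfc η α B nf • ∑ f, HF f * Nmat η α B HR HF k * HF f
            + Crc η α B nr • ∑ r, HR r * Nmat η α B HR HF k * HR r) *ᵥ u) = _
        rw [Matrix.add_mulVec, dotProduct_add, Matrix.smul_mulVec,
          Matrix.smul_mulVec, dotProduct_smul, dotProduct_smul,
          Aux.sum_mulVec, Aux.sum_mulVec, Aux.dot_sum, Aux.dot_sum]
        simp [smul_eq_mul]
      have hterm_f : ∀ f, 0 ≤ u ⬝ᵥ ((HF f * Nmat η α B HR HF k * HF f) *ᵥ u) := fun f => by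
        rw [Aux.quad_conj (hHF f).1]
        exact Aux.quad_nonneg (hNpsd k) _
      have hterm_r : ∀ r, 0 ≤ u ⬝ᵥ ((HR r * Nmat η α B HR HF k * HR r) *ᵥ u) := fun r => by
        rw [Aux.quad_conj (hHR r).1]
        exact Aux.quad_nonneg (hNpsd k) _
      have hdrop : Cfc η α B nf * (u ⬝ᵥ ((HF pstar.2 * Nmat η α B HR HF k * HF pstar.2) *ᵥ u))
          + Crc η α B nr * (u ⬝ᵥ ((HR pstar.1 * Nmat η α B HR HF k * HR pstar.1) *ᵥ u))
          ≤ u ⬝ᵥ (Nmat η α B HR HF (k+1) *ᵥ u) := by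
        rw [hexp]
        gcongr
        · exact Finset.single_le_sum (fun f _ => hterm_f f) (Finset.mem_univ pstar.2)
        · exact Finset.single_le_sum (fun r _ => hterm_r r) (Finset.mem_univ pstar.1)
      set N := Nmat η α B HR HF k with hNdef
      set a := sf • (HF pstar.2 *ᵥ u) with hadef
      set b := sr • (HR pstar.1 *ᵥ u) with hbdef
      have hqa : a ⬝ᵥ N *ᵥ a
          = Cfc η α B nf * (u ⬝ᵥ ((HF pstar.2 * N * HF pstar.2) *ᵥ u)) := by
        rw [Aux.quad_conj (hHF pstar.2).1, hadef, smul_dotProduct, Matrix.mulVec_smul,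
          dotProduct_smul, ← hsfsq]
        simp [smul_eq_mul]; ring
      have hqb : b ⬝ᵥ N *ᵥ b
          = Crc η α B nr * (u ⬝ᵥ ((HR pstar.1 * N * HR pstar.1) *ᵥ u)) := by
        rw [Aux.quad_conj (hHR pstar.1).1, hbdef, smul_dotProduct, Matrix.mulVec_smul,
          dotProduct_smul, ← hsrsq]
        simp [smul_eq_mul]; ring
      have hab : a + b = ((sr + sf) * lam) • u := by
        have h2 : (sr + sf) • Drf Cr' Cf' HR HF pstar
            = sr • HR pstar.1 + sf • HF pstar.2 := by
          show (sr + sf) • (Cr' • HR pstar.1 + Cf' • HF pstar.2) = _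
          rw [smul_add, smul_smul, smul_smul, hscale_r, hscale_f]
        calc a + b = (sf • HF pstar.2) *ᵥ u + (sr • HR pstar.1) *ᵥ u := by
              rw [hadef, hbdef, Matrix.smul_mulVec, Matrix.smul_mulVec]
          _ = ((sr + sf) • Drf Cr' Cf' HR HF pstar) *ᵥ u := by
              rw [h2, Matrix.add_mulVec, add_comm]
          _ = ((sr + sf) * lam) • u := by
              rw [Matrix.smul_mulVec, huD, smul_smul]
      have hpara := Aux.para (hNpsd k) a b
      have habq : (a + b) ⬝ᵥ N *ᵥ (a + b) = ((sr + sf) * lam) ^ 2 * (u ⬝ᵥ (N *ᵥ u)) := by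
        rw [hab, smul_dotProduct, Matrix.mulVec_smul, dotProduct_smul]
        simp [smul_eq_mul]; ring
      have hstep : ((sr + sf) ^ 2 * lam ^ 2 / 2) * (u ⬝ᵥ (N *ᵥ u))
          ≤ u ⬝ᵥ (Nmat η α B HR HF (k+1) *ᵥ u) := by
        have h3 : ((sr + sf) ^ 2 * lam ^ 2 / 2) * (u ⬝ᵥ (N *ᵥ u))
            = (1/2) * ((a + b) ⬝ᵥ N *ᵥ (a + b)) := by
          rw [habq]; ring
        rw [h3]
        refine hpara.trans ?_
        rw [hqa, hqb]
        exact hdrop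
      calc ((sr + sf) ^ 2 * lam ^ 2 / 2) ^ (k+1)
          = ((sr + sf) ^ 2 * lam ^ 2 / 2) * ((sr + sf) ^ 2 * lam ^ 2 / 2) ^ k := by
            rw [pow_succ]; ring
        _ ≤ ((sr + sf) ^ 2 * lam ^ 2 / 2) * (u ⬝ᵥ (N *ᵥ u)) := by
            have h0 : 0 ≤ (sr + sf) ^ 2 * lam ^ 2 / 2 :=
              div_nonneg (mul_nonneg (sq_nonneg _) (sq_nonneg _)) (by norm_num)
            exact mul_le_mul_of_nonneg_left ih h0
        _ ≤ u ⬝ᵥ (Nmat η α B HR HF (k+1) *ᵥ u) := hstep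
  -- the square roots of the mixed Hessians
  have hsqrt : ∀ p, psdSqrt (Drf Cr' Cf' HR HF p) = (hDpsd p).sqrt := fun p => dif_pos (hDpsd p)
  have hSentry : ∀ p q, Smat Cr' Cf' HR HF p q
      = frob ((hDpsd p).sqrt * (hDpsd q).sqrt) := by
    intro p q
    show frob (psdSqrt (Drf Cr' Cf' HR HF p) * psdSqrt (Drf Cr' Cf' HR HF q)) = _
    rw [hsqrt, hsqrt]
  have hSherm : (Smat Cr' Cf' HR HF).IsHermitian := by
    show (Smat Cr' Cf' HR HF)ᴴ = Smat Cr' Cf' HR HF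
    ext p q
    rw [Matrix.conjTranspose_apply, star_trivial, hSentry, hSentry p q,
      ← Aux.frob_transpose ((hDpsd p).sqrt * (hDpsd q).sqrt), Matrix.transpose_mul,
      Aux.transpose_eq (hDpsd p).posSemidef_sqrt.1, Aux.transpose_eq (hDpsd q).posSemidef_sqrt.1]
  set lamS := lamMax (Smat Cr' Cf' HR HF) with hlamSdef
  have hlamS0 : 0 < lamS := by
    have hdiag : Smat Cr' Cf' HR HF p0 p0 = frob (Drf Cr' Cf' HR HF p0) := by
      rw [hSentry, (hDpsd p0).sqrt_mul_self]
    have hray := Aux.quad_le_lamMax hSherm (Pi.single p0 1)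
    have hq : (Pi.single p0 1 : Fin nr × Fin nf → ℝ) ⬝ᵥ (Smat Cr' Cf' HR HF *ᵥ Pi.single p0 1)
        = Smat Cr' Cf' HR HF p0 p0 := by
      simp [Matrix.mulVec_single, dotProduct, Pi.single_apply]
    have hq1 : (Pi.single p0 1 : Fin nr × Fin nf → ℝ) ⬝ᵥ Pi.single p0 1 = 1 := by
      simp [dotProduct, Pi.single_apply]
    rw [hq, hq1, mul_one, hdiag] at hray
    exact lt_of_lt_of_le (Aux.frob_pos hp0) hray
  -- the mix-Hessian
  set cP : ℝ := (nr : ℝ) * nf with hcPdef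
  have hcP0 : 0 < cP := by
    have h1 : (0:ℝ) < nr := by exact_mod_cast hnr
    have h2 : (0:ℝ) < nf := by exact_mod_cast hnf
    exact mul_pos h1 h2
  have hDmixpsd : (Dmix Cr' Cf' HR HF).PosSemidef := by
    have := Aux.psd_smul (Aux.psd_sum Finset.univ (fun p => Drf Cr' Cf' HR HF p)
      (fun p _ => hDpsd p)) (inv_nonneg.mpr hcP0.le)
    exact this
  set lamD := lamMax (Dmix Cr' Cf' HR HF) with hlamDdef
  have hlamD0 : 0 ≤ lamD := Aux.lamMax_nonneg hDmixpsd
  -- key coherence bound : cP * lamD ≤ lamS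
  have hcoh : cP * lamD ≤ lamS := by
    obtain ⟨w, hw1, hwD⟩ := Aux.exists_top_eigenvector hDmixpsd.1
    have hA : (∑ p, Drf Cr' Cf' HR HF p) = cP • Dmix Cr' Cf' HR HF := by
      show _ = cP • (cP⁻¹ • ∑ p, Drf Cr' Cf' HR HF p)
      rw [smul_smul, mul_inv_cancel₀ hcP0.ne', one_smul]
    have hAw : (∑ p, Drf Cr' Cf' HR HF p) *ᵥ w = (cP * lamD) • w := by
      rw [hA, Matrix.smul_mulVec, hwD, smul_smul]
    set t := cP * lamD with htdef
    have ht0 : 0 ≤ t := mul_nonneg hcP0.le hlamD0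
    set x : Fin nr × Fin nf → ℝ :=
      fun p => Real.sqrt (w ⬝ᵥ (Drf Cr' Cf' HR HF p *ᵥ w)) with hxdef
    have hx2 : ∀ p, x p ^ 2 = w ⬝ᵥ (Drf Cr' Cf' HR HF p *ᵥ w) := fun p =>
      Real.sq_sqrt (Aux.quad_nonneg (hDpsd p) w)
    have hxx : x ⬝ᵥ x = t := by
      calc x ⬝ᵥ x = ∑ p, x p ^ 2 := by simp [dotProduct, pow_two]
        _ = ∑ p, w ⬝ᵥ (Drf Cr' Cf' HR HF p *ᵥ w) := Finset.sum_congr rfl fun p _ => hx2 p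
        _ = w ⬝ᵥ ((∑ p, Drf Cr' Cf' HR HF p) *ᵥ w) := by
            rw [Aux.sum_mulVec, Aux.dot_sum]
        _ = t := by rw [hAw, dotProduct_smul, smul_eq_mul, hw1, mul_one]
    have hsq : t ^ 2 = ∑ p, ∑ q, w ⬝ᵥ (Drf Cr' Cf' HR HF p *ᵥ (Drf Cr' Cf' HR HF q *ᵥ w)) := by
      have h1 : (∑ p, Drf Cr' Cf' HR HF p) *ᵥ ((∑ q, Drf Cr' Cf' HR HF q) *ᵥ w)
          = (t * t) • w := by
        rw [hAw, Matrix.mulVec_smul, hAw, smul_smul]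
      have h2 : w ⬝ᵥ ((∑ p, Drf Cr' Cf' HR HF p) *ᵥ ((∑ q, Drf Cr' Cf' HR HF q) *ᵥ w))
          = t ^ 2 := by
        rw [h1, dotProduct_smul, smul_eq_mul, hw1, mul_one, pow_two]
      rw [← h2, Aux.sum_mulVec, Aux.dot_sum]
      refine Finset.sum_congr rfl fun p _ => ?_
      rw [Aux.sum_mulVec, Aux.mulVec_sum, Aux.dot_sum]
    have hterm : ∀ p q, w ⬝ᵥ (Drf Cr' Cf' HR HF p *ᵥ (Drf Cr' Cf' HR HF q *ᵥ w))
        ≤ x p * (Smat Cr' Cf' HR HF p q * x q) := by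
      intro p q
      have hPherm := (hDpsd p).posSemidef_sqrt.1
      have hQherm := (hDpsd q).posSemidef_sqrt.1
      have hP := (hDpsd p).sqrt_mul_self
      have hQ := (hDpsd q).sqrt_mul_self
      set P := (hDpsd p).sqrt with hPdef
      set Q := (hDpsd q).sqrt with hQdef
      have h1 : w ⬝ᵥ (Drf Cr' Cf' HR HF p *ᵥ (Drf Cr' Cf' HR HF q *ᵥ w))
          = (P *ᵥ w) ⬝ᵥ ((P * Q) *ᵥ (Q *ᵥ w)) := by
        rw [← hP, ← hQ, ← Matrix.mulVec_mulVec (N := P), ← Matrix.mulVec_mulVec (N := Q),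
          Aux.herm_dot hPherm, Matrix.mulVec_mulVec, Matrix.mulVec_mulVec, mul_assoc]
      have h2 : Real.sqrt ((P *ᵥ w) ⬝ᵥ (P *ᵥ w)) = x p := by
        rw [hxdef]
        congr 1
        rw [← Aux.herm_dot hPherm, ← hP]
        rw [Matrix.mulVec_mulVec]
      have h3 : Real.sqrt ((Q *ᵥ w) ⬝ᵥ (Q *ᵥ w)) = x q := by
        rw [hxdef]
        congr 1
        rw [← Aux.herm_dot hQherm, ← hQ]
        rw [Matrix.mulVec_mulVec]
      have h4 := Aux.dot_mulVec_frob (P *ᵥ w) (Q *ᵥ w) (P * Q)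
      rw [h1]
      calc (P *ᵥ w) ⬝ᵥ ((P * Q) *ᵥ (Q *ᵥ w))
          ≤ Real.sqrt ((P *ᵥ w) ⬝ᵥ (P *ᵥ w)) *
              (frob (P * Q) * Real.sqrt ((Q *ᵥ w) ⬝ᵥ (Q *ᵥ w))) := h4
        _ = x p * (Smat Cr' Cf' HR HF p q * x q) := by rw [h2, h3, hSentry p q, hPdef, hQdef]
    have hray := Aux.quad_le_lamMax hSherm x
    have hquadx : x ⬝ᵥ (Smat Cr' Cf' HR HF *ᵥ x)
        = ∑ p, ∑ q, x p * (Smat Cr' Cf' HR HF p q * x q) := by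
      simp [dotProduct, Matrix.mulVec, Finset.mul_sum]
    have hfin : t ^ 2 ≤ lamS * t := by
      calc t ^ 2 = ∑ p, ∑ q, w ⬝ᵥ (Drf Cr' Cf' HR HF p *ᵥ (Drf Cr' Cf' HR HF q *ᵥ w)) := hsq
        _ ≤ ∑ p, ∑ q, x p * (Smat Cr' Cf' HR HF p q * x q) :=
            Finset.sum_le_sum fun p _ => Finset.sum_le_sum fun q _ => hterm p q
        _ = x ⬝ᵥ (Smat Cr' Cf' HR HF *ᵥ x) := hquadx.symm
        _ ≤ lamS * (x ⬝ᵥ x) := hray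
        _ = lamS * t := by rw [hxx]
    rcases eq_or_lt_of_le ht0 with h | h
    · rw [← h]; exact hlamS0.le
    · rw [pow_two] at hfin
      exact le_of_mul_le_mul_right hfin h
  -- σ and the comparison of bases
  have hσ : σ = lamS / lam := by
    rw [hσe]
    show lamMax (Smat Cr' Cf' HR HF) / (⨆ p, lamMax (Drf Cr' Cf' HR HF p)) = _
    rw [hMsup]
  have hσ0 : 0 < σ := by
    rw [hσ]; exact div_pos hlamS0 hM0
  have hσlam : lam * σ = lamS := by
    rw [hσ]; field_simp
  have hXθ : (sr + sf) ^ 2 * cP ^ 2 * lamD ^ 2 / (2 * σ ^ 2)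
      ≤ (sr + sf) ^ 2 * lam ^ 2 / 2 := by
    have hpos2 : (0:ℝ) < 2 * σ ^ 2 := by
      have h := hσ0
      positivity
    rw [div_le_iff₀ hpos2]
    have h5 : cP ^ 2 * lamD ^ 2 ≤ lam ^ 2 * σ ^ 2 := by
      have h6 : (cP * lamD) ^ 2 ≤ lamS ^ 2 :=
        pow_le_pow_left₀ (mul_nonneg hcP0.le hlamD0) hcoh 2
      calc cP ^ 2 * lamD ^ 2 = (cP * lamD) ^ 2 := by ring
        _ ≤ lamS ^ 2 := h6
        _ = (lam * σ) ^ 2 := by rw [hσlam]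
        _ = lam ^ 2 * σ ^ 2 := by ring
    calc (sr + sf) ^ 2 * cP ^ 2 * lamD ^ 2 = (sr + sf) ^ 2 * (cP ^ 2 * lamD ^ 2) := by ring
      _ ≤ (sr + sf) ^ 2 * (lam ^ 2 * σ ^ 2) := by
          exact mul_le_mul_of_nonneg_left h5 (sq_nonneg _)
      _ = (sr + sf) ^ 2 * lam ^ 2 / 2 * (2 * σ ^ 2) := by ring
  have hX0 : 0 ≤ (sr + sf) ^ 2 * cP ^ 2 * lamD ^ 2 / (2 * σ ^ 2) :=
    div_nonneg (mul_nonneg (mul_nonneg (sq_nonneg _) (sq_nonneg _)) (sq_nonneg _))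
      (mul_nonneg (by norm_num) (sq_nonneg _))
  have part1 : ∀ k, 1 ≤ k →
      1 * ((sr + sf) ^ 2 * cP ^ 2 * lamD ^ 2 / (2 * σ ^ 2)) ^ k
        ≤ (Nmat η α B HR HF k).trace := by
    intro k _
    rw [one_mul]
    calc ((sr + sf) ^ 2 * cP ^ 2 * lamD ^ 2 / (2 * σ ^ 2)) ^ k
        ≤ ((sr + sf) ^ 2 * lam ^ 2 / 2) ^ k := pow_le_pow_left₀ hX0 hXθ k
      _ ≤ u ⬝ᵥ (Nmat η α B HR HF k *ᵥ u) := key k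
      _ ≤ (Nmat η α B HR HF k).trace := Aux.trace_ge_quad (hNpsd k) hu1
  refine ⟨part1, ?_⟩
  intro hlt
  have hX1 : 1 < (sr + sf) ^ 2 * cP ^ 2 * lamD ^ 2 / (2 * σ ^ 2) := by
    have hpos2 : (0:ℝ) < 2 * σ ^ 2 := by
      have h := hσ0
      positivity
    rw [lt_div_iff₀ hpos2, one_mul]
    have h7 : 0 ≤ Real.sqrt 2 * σ := mul_nonneg (Real.sqrt_nonneg 2) hσ0.le
    have h8 : (Real.sqrt 2 * σ) * (Real.sqrt 2 * σ)
        < ((sr + sf) * cP * lamD) * ((sr + sf) * cP * lamD) :=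
      mul_self_lt_mul_self h7 hlt
    have h9 : Real.sqrt 2 * Real.sqrt 2 = 2 := Real.mul_self_sqrt (by norm_num)
    calc 2 * σ ^ 2 = (Real.sqrt 2 * Real.sqrt 2) * σ ^ 2 := by rw [h9]
      _ = (Real.sqrt 2 * σ) * (Real.sqrt 2 * σ) := by ring
      _ < ((sr + sf) * cP * lamD) * ((sr + sf) * cP * lamD) := h8
      _ = (sr + sf) ^ 2 * cP ^ 2 * lamD ^ 2 := by ring
  have htend : Tendsto (fun k : ℕ =>
      ((sr + sf) ^ 2 * cP ^ 2 * lamD ^ 2 / (2 * σ ^ 2)) ^ k) atTop atTop :=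
    tendsto_pow_atTop_atTop_of_one_lt hX1
  refine tendsto_atTop_mono' atTop ?_ htend
  filter_upwards [eventually_ge_atTop 1] with k hk
  have := part1 k hk
  rwa [one_mul] at this


end
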